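/- Let (p_a)_{1≤a≤m} be [0,1]-valued random variables such that each p_a for a ≤ m₀ is super-uniform (P(p_a ≤ t) ≤ t for all t) and the family is PRDS on {1,…,m₀}. Then the Benjamini–Hochberg procedure at level α satisfies E[FDP(R_BH, {1,…,m₀})] ≤ α·m₀/m ≤ α. -/

import Mathlib

open Finset MeasureTheory

/-- The false discovery proportion `FDP(R, H₀) = |R ∩ H₀| / max(|R|, 1)`. -/
noncomputable def FDP {ι : Type*} [DecidableEq ι] (R H₀ : Finset ι) : ℝ :=
  ((R ∩ H₀).card : ℝ) / (max R.card 1 : ℕ)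

/-- Sorted list of the p-values `(p i)_{i : Fin m}` (with multiplicity). -/
noncomputable def sortedFin (m : ℕ) (p : Fin m → ℝ) : List ℝ :=
  Multiset.sort (Multiset.ofList (List.ofFn p)) (· ≤ ·)

/-- `k`-th order statistic `p_(k)` (with the convention `p_(0) = 0`). -/
noncomputable def porderFin (m : ℕ) (p : Fin m → ℝ) (k : ℕ) : ℝ :=
  if k = 0 then 0 else (sortedFin m p).getD (k - 1) 0

/-- `k̂ = max {k ≤ m : p_(k) ≤ α k / m}`. -/
noncomputable def khatFin (α : ℝ) (m : ℕ) (p : Fin m → ℝ) : ℕ :=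
  sSup {k : ℕ | k ≤ m ∧ porderFin m p k ≤ α * k / m}

/-- The BH rejection set at level `α` (threshold form): `{i : p_i ≤ α k̂ / m}`. -/
noncomputable def RBHFin (α : ℝ) (m : ℕ) (p : Fin m → ℝ) : Finset (Fin m) :=
  Finset.univ.filter fun i => p i ≤ α * khatFin α m p / m

noncomputable def NN (m : ℕ) (p : Fin m → ℝ) (t : ℝ) : ℕ :=
  (univ.filter fun i => p i ≤ t).card

lemma length_sortedFin (m : ℕ) (p : Fin m → ℝ) : (sortedFin m p).length = m := by
  simp [sortedFin]

lemma sorted_sortedFin (m : ℕ) (p : Fin m → ℝ) : (sortedFin m p).Pairwise (· ≤ ·) :=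
  Multiset.pairwise_sort (s := _) (r := _)

lemma countP_eq_sum_ite {α : Type*} (l : List α) (q : α → Prop) [DecidablePred q] :
    l.countP (fun x => decide (q x)) = (l.map (fun x => if q x then (1:ℕ) else 0)).sum := by
  induction l with
  | nil => simp
  | cons a l ih =>
    by_cases h : q a <;> (simp [List.countP_cons, ih, h]; try omega)

lemma countP_ofFn (n : ℕ) (f : Fin n → ℝ) (q : ℝ → Prop) [DecidablePred q] :
    (List.ofFn f).countP (fun x => decide (q x)) = (univ.filter fun i => q (f i)).card := by
  rw [List.ofFn_eq_map, List.countP_map, Finset.card_filter]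
  rw [show ((fun x => decide (q x)) ∘ f) = fun i => decide (q (f i)) from rfl]
  rw [countP_eq_sum_ite _ (fun i => q (f i)), Fin.sum_univ_def]

lemma countP_sortedFin (m : ℕ) (p : Fin m → ℝ) (t : ℝ) :
    (sortedFin m p).countP (fun x => decide (x ≤ t)) = NN m p t := by
  have hperm : (sortedFin m p).Perm (List.ofFn p) := by
    rw [← Multiset.coe_eq_coe]
    unfold sortedFin
    rw [Multiset.sort_eq]
  rw [hperm.countP_eq, countP_ofFn]
  rfl

lemma sorted_getD_le_iff (L : List ℝ) (hsort : L.Pairwise (· ≤ ·)) (k : ℕ)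
    (hk1 : 1 ≤ k) (hkm : k ≤ L.length) (t : ℝ) :
    L.getD (k - 1) 0 ≤ t ↔ k ≤ L.countP (fun x => decide (x ≤ t)) := by
  have hmono : ∀ i j : ℕ, (hi : i < L.length) → (hj : j < L.length) → i ≤ j →
      L.get ⟨i, hi⟩ ≤ L.get ⟨j, hj⟩ := by
    intro i j hi hj hij
    rcases eq_or_lt_of_le hij with h | h
    · subst h; rfl
    · exact List.pairwise_iff_get.mp hsort ⟨i, hi⟩ ⟨j, hj⟩ h
  have hk1' : k - 1 < L.length := by omega
  have hgetD : L.getD (k - 1) 0 = L.get ⟨k - 1, hk1'⟩ := List.getD_eq_getElem L 0 hk1'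
  rw [hgetD]
  constructor
  · intro h
    have hsplit := List.countP_append (l₁ := L.take k) (l₂ := L.drop k) (p := fun x => decide (x ≤ t))
    rw [List.take_append_drop] at hsplit
    have hlt : (L.take k).length = k := by rw [List.length_take]; omega
    have htk : (L.take k).countP (fun x => decide (x ≤ t)) = (L.take k).length := by
      rw [List.countP_eq_length]
      intro a ha
      obtain ⟨i, hi, rfl⟩ := List.mem_iff_get.mp ha
      have hi' : (i : ℕ) < k := by have h2 := i.2; omega
      have hcast : (L.take k).get i = L.get ⟨i, by omega⟩ := by simp [List.getElem_take]
      rw [hcast]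
      simp only [decide_eq_true_eq]
      exact le_trans (hmono i (k-1) (by omega) hk1' (by omega)) h
    omega
  · intro h
    by_contra hcon
    push_neg at hcon
    have hsplit := List.countP_append (l₁ := L.take (k-1)) (l₂ := L.drop (k-1)) (p := fun x => decide (x ≤ t))
    rw [List.take_append_drop] at hsplit
    have h1 : (L.take (k-1)).countP (fun x => decide (x ≤ t)) ≤ k - 1 := by
      calc _ ≤ (L.take (k-1)).length := List.countP_le_length
      _ ≤ k - 1 := by rw [List.length_take]; omega
    have h2 : (L.drop (k-1)).countP (fun x => decide (x ≤ t)) = 0 := by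
      rw [List.countP_eq_zero]
      intro a ha
      obtain ⟨i, hi, rfl⟩ := List.mem_iff_get.mp ha
      have hlen' : (L.drop (k-1)).length = L.length - (k-1) := by rw [List.length_drop]
      have hcast : (L.drop (k-1)).get i = L.get ⟨k - 1 + i, by have := i.2; omega⟩ := by
        simp [List.getElem_drop]
      rw [hcast]
      simp only [decide_eq_true_eq, not_le]
      exact lt_of_lt_of_le hcon (hmono (k-1) (k-1+(i:ℕ)) hk1' (by have := i.2; omega) (by omega))
    omega

lemma porder_le_iff (m : ℕ) (p : Fin m → ℝ) (k : ℕ) (hk1 : 1 ≤ k) (hkm : k ≤ m) (t : ℝ) :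
    porderFin m p k ≤ t ↔ k ≤ NN m p t := by
  rw [porderFin, if_neg (by omega), ← countP_sortedFin m p t]
  exact sorted_getD_le_iff _ (sorted_sortedFin m p) k hk1 (by rw [length_sortedFin]; omega) t

section khat
variable (α : ℝ) (m : ℕ) (p : Fin m → ℝ)

lemma kset_zero_mem : 0 ∈ {k : ℕ | k ≤ m ∧ porderFin m p k ≤ α * k / m} := by
  simp [porderFin]

lemma kset_bdd : BddAbove {k : ℕ | k ≤ m ∧ porderFin m p k ≤ α * k / m} :=
  ⟨m, fun k hk => hk.1⟩

lemma khat_mem : khatFin α m p ∈ {k : ℕ | k ≤ m ∧ porderFin m p k ≤ α * k / m} :=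
  Nat.sSup_mem ⟨0, kset_zero_mem α m p⟩ (kset_bdd α m p)

lemma khat_le_m : khatFin α m p ≤ m := (khat_mem α m p).1

lemma NN_mono (t₁ t₂ : ℝ) (h : t₁ ≤ t₂) : NN m p t₁ ≤ NN m p t₂ := by
  apply Finset.card_le_card
  intro i hi
  simp only [Finset.mem_filter] at *
  exact ⟨hi.1, le_trans hi.2 h⟩

lemma NN_anti (q : Fin m → ℝ) (h : ∀ i, p i ≤ q i) (t : ℝ) : NN m q t ≤ NN m p t := by
  apply Finset.card_le_card
  intro i hi
  simp only [Finset.mem_filter] at *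
  exact ⟨hi.1, le_trans (h i) hi.2⟩

lemma khat_antitone (q : Fin m → ℝ) (h : ∀ i, p i ≤ q i) :
    khatFin α m q ≤ khatFin α m p := by
  have hsub : {k : ℕ | k ≤ m ∧ porderFin m q k ≤ α * k / m} ⊆
      {k : ℕ | k ≤ m ∧ porderFin m p k ≤ α * k / m} := by
    intro k hk
    obtain ⟨hkm, hkq⟩ := hk
    rcases Nat.eq_zero_or_pos k with rfl | hk1
    · exact kset_zero_mem α m p
    · refine ⟨hkm, ?_⟩
      rw [porder_le_iff m p k hk1 hkm]
      rw [porder_le_iff m q k hk1 hkm] at hkq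
      exact le_trans hkq (NN_anti m p q h _)
  exact le_csSup (kset_bdd α m p) (hsub (khat_mem α m q))

lemma khat_le_iff (k : ℕ) :
    khatFin α m p ≤ k ↔ ∀ j, k < j → j ≤ m → NN m p (α * j / m) < j := by
  constructor
  · intro h j hkj hjm
    by_contra hcon
    push_neg at hcon
    have hj : j ∈ {k : ℕ | k ≤ m ∧ porderFin m p k ≤ α * k / m} :=
      ⟨hjm, (porder_le_iff m p j (by omega) hjm _).mpr hcon⟩
    have h2 : j ≤ khatFin α m p := le_csSup (kset_bdd α m p) hj
    omega
  · intro h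
    by_contra hcon
    push_neg at hcon
    have hmem := khat_mem α m p
    have h1 : 1 ≤ khatFin α m p := by omega
    have := (porder_le_iff m p _ h1 hmem.1 _).mp hmem.2
    exact absurd this (not_le.mpr (h _ hcon hmem.1))

lemma card_RBH (hα0 : 0 ≤ α) (hm : 1 ≤ m) :
    (RBHFin α m p).card = khatFin α m p := by
  have hcard : (RBHFin α m p).card = NN m p (α * khatFin α m p / m) := rfl
  rcases Nat.eq_zero_or_pos (khatFin α m p) with h0 | h1
  · rw [hcard, h0]
    by_contra hcon
    have h1' : 1 ≤ NN m p (α * (0:ℕ) / m) := by omega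
    have h1m : 1 ≤ NN m p (α * 1 / m) := by
      refine le_trans h1' (NN_mono m p _ _ ?_)
      have hh : (0:ℝ) ≤ α * 1 / m := by positivity
      calc α * ((0:ℕ):ℝ) / m = 0 := by norm_num
      _ ≤ α * 1 / m := hh
    have hmem : 1 ∈ {j : ℕ | j ≤ m ∧ porderFin m p j ≤ α * j / m} :=
      ⟨hm, (porder_le_iff m p 1 le_rfl hm _).mpr (by exact_mod_cast h1m)⟩
    have h2 : 1 ≤ khatFin α m p := le_csSup (kset_bdd α m p) hmem
    omega
  · have hmem := khat_mem α m p
    have hle : khatFin α m p ≤ NN m p (α * khatFin α m p / m) :=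
      (porder_le_iff m p _ h1 hmem.1 _).mp hmem.2
    rw [hcard]
    by_contra hcon
    have hlt : khatFin α m p < NN m p (α * khatFin α m p / m) := by omega
    have hjm : NN m p (α * khatFin α m p / m) ≤ m := by
      have := Finset.card_filter_le (univ : Finset (Fin m)) (fun i => p i ≤ α * khatFin α m p / m)
      simpa [NN] using this
    have hpj : porderFin m p (NN m p (α * khatFin α m p / m)) ≤
        α * (NN m p (α * khatFin α m p / m)) / m := by
      refine le_trans ((porder_le_iff m p _ (by omega) hjm _).mpr le_rfl) ?_
      have hmpos : (0:ℝ) < m := by exact_mod_cast hm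
      have hcast : (khatFin α m p : ℝ) ≤ (NN m p (α * khatFin α m p / m) : ℝ) := by
        exact_mod_cast hlt.le
      gcongr
    have hjmem : NN m p (α * khatFin α m p / m) ∈
        {j : ℕ | j ≤ m ∧ porderFin m p j ≤ α * j / m} := ⟨hjm, hpj⟩
    have h2 : NN m p (α * khatFin α m p / m) ≤ khatFin α m p := le_csSup (kset_bdd α m p) hjmem
    omega
end khat

section meas
variable (α : ℝ) (m : ℕ)

lemma measurable_NN (t : ℝ) : Measurable fun x : Fin m → ℝ => NN m x t := by
  have h : (fun x : Fin m → ℝ => NN m x t)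
      = fun x => ∑ i : Fin m, if x i ≤ t then 1 else 0 := by
    funext x
    rw [NN, Finset.card_filter]
  rw [h]
  exact Finset.measurable_sum _ fun i _ =>
    Measurable.ite (measurableSet_le (measurable_pi_apply i) measurable_const)
      measurable_const measurable_const

lemma measurableSet_khat_le (k : ℕ) :
    MeasurableSet {x : Fin m → ℝ | khatFin α m x ≤ k} := by
  have h : {x : Fin m → ℝ | khatFin α m x ≤ k}
      = ⋂ (j : ℕ), ⋂ (_ : k < j ∧ j ≤ m), {x | NN m x (α * j / m) < j} := by
    ext x
    simp only [Set.mem_setOf_eq, Set.mem_iInter, khat_le_iff]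
    tauto
  rw [h]
  exact MeasurableSet.iInter fun j => MeasurableSet.iInter fun _ =>
    measurable_NN m (α * j / m) measurableSet_Iio

lemma upperSet_khat_le (k : ℕ) :
    IsUpperSet {x : Fin m → ℝ | khatFin α m x ≤ k} := by
  intro x y hxy hx
  exact le_trans (khat_antitone α m x y (fun i => hxy i) ) hx
end meas

lemma FDP_eq (α : ℝ) (m : ℕ) (hα0 : 0 ≤ α) (hm : 1 ≤ m) (q : Fin m → ℝ)
    (H₀ : Finset (Fin m)) :
    FDP (RBHFin α m q) H₀ = ∑ j ∈ Finset.range m, ∑ a ∈ H₀,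
      (if khatFin α m q = j + 1 ∧ q a ≤ α * (j+1) / m then (1:ℝ)/(j+1) else 0) := by
  classical
  have hcardR : (RBHFin α m q).card = khatFin α m q := card_RBH α m q hα0 hm
  rcases Nat.eq_zero_or_pos (khatFin α m q) with h0 | h1
  · have hR : RBHFin α m q = ∅ := Finset.card_eq_zero.mp (by rw [hcardR, h0])
    have hleft : FDP (RBHFin α m q) H₀ = 0 := by
      rw [FDP, hR]
      simp
    rw [hleft]
    symm
    apply Finset.sum_eq_zero
    intro j _
    apply Finset.sum_eq_zero
    intro a _
    rw [if_neg]
    rintro ⟨hk, -⟩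
    omega
  · have hkm : khatFin α m q ≤ m := khat_le_m α m q
    rw [Finset.sum_eq_single (khatFin α m q - 1)]
    · have hsucc : khatFin α m q - 1 + 1 = khatFin α m q := by omega
      have hcast : ((khatFin α m q - 1 : ℕ) : ℝ) + 1 = (khatFin α m q : ℝ) := by
        rw [Nat.cast_sub h1]; ring
      rw [hsucc, hcast]
      simp only [eq_self_iff_true, true_and]
      rw [← Finset.sum_filter]
      rw [FDP, hcardR]
      have hmax : max (khatFin α m q) 1 = khatFin α m q := by omega
      rw [hmax]
      have hRH : RBHFin α m q ∩ H₀ = H₀.filter (fun a => q a ≤ α * khatFin α m q / m) := by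
        ext a
        simp [RBHFin, Finset.mem_filter, Finset.mem_inter, and_comm]
      rw [hRH]
      rw [Finset.sum_const]
      simp only [nsmul_eq_mul]
      rw [div_eq_mul_inv, one_div]
    · intro j hj hne
      apply Finset.sum_eq_zero
      intro a _
      rw [if_neg]
      rintro ⟨hk, -⟩
      omega
    · intro hnotmem
      exfalso
      rw [Finset.mem_range] at hnotmem
      omega

lemma core_sum_bound {Ω : Type*} [MeasurableSpace Ω] (μ : Measure Ω) [IsProbabilityMeasure μ]
    (m : ℕ) (hm : 1 ≤ m) (α : ℝ) (hα0 : 0 < α)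
    (p : Fin m → Ω → ℝ) (hmeas : ∀ a, Measurable (p a)) (a : Fin m)
    (hsuper : ∀ t : ℝ, μ {ω | p a ω ≤ t} ≤ ENNReal.ofReal t)
    (hPRDS : ∀ D : Set (Fin m → ℝ), MeasurableSet D → IsUpperSet D →
      ∀ t₁ t₂ : ℝ, t₁ ≤ t₂ →
        μ ({ω | (fun i => p i ω) ∈ D} ∩ {ω | p a ω ≤ t₁}) * μ {ω | p a ω ≤ t₂}
          ≤ μ ({ω | (fun i => p i ω) ∈ D} ∩ {ω | p a ω ≤ t₂})
              * μ {ω | p a ω ≤ t₁}) :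
    ∑ j ∈ Finset.range m,
      (μ ({ω | khatFin α m (fun i => p i ω) = j + 1} ∩ {ω | p a ω ≤ α * (j+1) / m})).toReal
        * (1/(j+1))
      ≤ α / m := by
  classical
  have hmR : (0:ℝ) < m := by exact_mod_cast hm
  set t : ℕ → ℝ := fun k => α * k / m with ht
  set D : ℕ → Set Ω := fun k => {ω | khatFin α m (fun i => p i ω) ≤ k} with hD
  set A : ℕ → Set Ω := fun k => {ω | p a ω ≤ t k} with hA
  have hmeasvec : Measurable (fun ω => (fun i => p i ω)) := measurable_pi_lambda _ hmeas
  have hDmeas : ∀ k, MeasurableSet (D k) := fun k => hmeasvec (measurableSet_khat_le α m k)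
  have hAmeas : ∀ k, MeasurableSet (A k) := fun k => measurableSet_le (hmeas a) measurable_const
  have hfin : ∀ s : Set Ω, μ s ≠ ⊤ := fun s => measure_ne_top μ s
  have ht_mono : ∀ k l : ℕ, k ≤ l → t k ≤ t l := by
    intro k l hkl
    have : (k:ℝ) ≤ l := by exact_mod_cast hkl
    simp only [ht]
    gcongr
  have ht_nonneg : ∀ k, 0 ≤ t k := fun k => by rw [ht]; positivity
  have hA_mono : ∀ k l : ℕ, k ≤ l → A k ⊆ A l := by
    intro k l hkl ω hω
    exact le_trans hω (ht_mono k l hkl)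
  have hD_mono : ∀ k l : ℕ, k ≤ l → D k ⊆ D l := by
    intro k l hkl ω hω
    exact le_trans hω hkl
  set ν : Set Ω → ℝ := fun s => (μ s).toReal with hν
  have hν_mono : ∀ s u : Set Ω, s ⊆ u → ν s ≤ ν u := fun s u h =>
    ENNReal.toReal_mono (hfin u) (measure_mono h)
  have hν_nonneg : ∀ s, 0 ≤ ν s := fun s => ENNReal.toReal_nonneg
  have hsuper' : ∀ k, ν (A k) ≤ t k := fun k =>
    ENNReal.toReal_le_of_le_ofReal (ht_nonneg k) (hsuper (t k))
  set c : ℕ → ℝ := fun k => ν (D k ∩ A k) / ν (A k) with hc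
  have hc_nonneg : ∀ k, 0 ≤ c k := fun k => div_nonneg (hν_nonneg _) (hν_nonneg _)
  have hc_le_one : ∀ k, c k ≤ 1 := fun k =>
    div_le_one_of_le₀ (hν_mono _ _ Set.inter_subset_right) (hν_nonneg _)
  -- PRDS consequence
  have key2 : ∀ k : ℕ, 1 ≤ k → c (k-1) * ν (A k) ≤ ν (D (k-1) ∩ A k) := by
    intro k hk
    have hprds := hPRDS {x | khatFin α m x ≤ k - 1} (measurableSet_khat_le α m (k-1))
      (upperSet_khat_le α m (k-1)) (t (k-1)) (t k) (ht_mono (k-1) k (by omega))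
    have hreal : ν (D (k-1) ∩ A (k-1)) * ν (A k) ≤ ν (D (k-1) ∩ A k) * ν (A (k-1)) := by
      have h1 := ENNReal.toReal_mono (by exact ENNReal.mul_ne_top (hfin _) (hfin _)) hprds
      rw [ENNReal.toReal_mul, ENNReal.toReal_mul] at h1
      exact h1
    by_cases hz : ν (A (k-1)) = 0
    · have hz2 : ν (D (k-1) ∩ A (k-1)) = 0 :=
        le_antisymm (hz ▸ hν_mono _ _ Set.inter_subset_right) (hν_nonneg _)
      rw [hc]
      simp only [hz2, hz, zero_div, zero_mul]
      exact hν_nonneg _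
    · have hzpos : 0 < ν (A (k-1)) := lt_of_le_of_ne (hν_nonneg _) (Ne.symm hz)
      rw [hc, div_mul_eq_mul_div, div_le_iff₀ hzpos]
      exact hreal
  -- monotonicity of c
  have hc_mono : ∀ k : ℕ, 1 ≤ k → c (k-1) ≤ c k := by
    intro k hk
    by_cases hz : ν (A k) = 0
    · have hz1 : ν (A (k-1)) = 0 :=
        le_antisymm (hz ▸ hν_mono _ _ (hA_mono (k-1) k (by omega))) (hν_nonneg _)
      have hz2 : ν (D (k-1) ∩ A (k-1)) = 0 :=
        le_antisymm (hz1 ▸ hν_mono _ _ Set.inter_subset_right) (hν_nonneg _)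
      have hz3 : ν (D k ∩ A k) = 0 :=
        le_antisymm (hz ▸ hν_mono _ _ Set.inter_subset_right) (hν_nonneg _)
      rw [hc]
      simp [hz1, hz2, hz3]
    · have hzpos : 0 < ν (A k) := lt_of_le_of_ne (hν_nonneg _) (Ne.symm hz)
      have h1 : c (k-1) * ν (A k) ≤ ν (D k ∩ A k) :=
        le_trans (key2 k hk) (hν_mono _ _ (Set.inter_subset_inter_left _
          (hD_mono (k-1) k (by omega))))
      rw [show c k = ν (D k ∩ A k) / ν (A k) from rfl, le_div_iff₀ hzpos]
      exact h1
  -- numerator identity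
  have hnum : ∀ k, ν (D k ∩ A k) = c k * ν (A k) := by
    intro k
    by_cases hz : ν (A k) = 0
    · have hz3 : ν (D k ∩ A k) = 0 :=
        le_antisymm (hz ▸ hν_mono _ _ Set.inter_subset_right) (hν_nonneg _)
      rw [hz3, hz, mul_zero]
    · rw [hc, div_mul_cancel₀ _ hz]
  -- term bound
  have hterm : ∀ j ∈ Finset.range m,
      (μ ({ω | khatFin α m (fun i => p i ω) = j + 1} ∩ {ω | p a ω ≤ α * (j+1) / m})).toReal
        * (1/(j+1)) ≤ (c (j+1) - c j) * (α / m) := by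
    intro j hj
    have hEset : {ω | khatFin α m (fun i => p i ω) = j + 1} ∩ {ω | p a ω ≤ α * (j+1) / m}
        = (D (j+1) ∩ A (j+1)) \ (D j ∩ A (j+1)) := by
      ext ω
      simp only [Set.mem_inter_iff, Set.mem_diff, Set.mem_setOf_eq, hD, hA, ht]
      constructor
      · rintro ⟨h1, h2⟩
        have : ((j:ℝ)+1) = ((j+1:ℕ):ℝ) := by push_cast; ring
        rw [this] at h2
        exact ⟨⟨by omega, h2⟩, fun hcon => by omega⟩
      · rintro ⟨⟨h1, h2⟩, h3⟩
        have hj2 : ¬ (khatFin α m (fun i => p i ω) ≤ j) := fun hcon => h3 ⟨hcon, h2⟩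
        have : ((j+1:ℕ):ℝ) = ((j:ℝ)+1) := by push_cast; ring
        rw [this] at h2
        exact ⟨by omega, h2⟩
    have hsub : D j ∩ A (j+1) ⊆ D (j+1) ∩ A (j+1) :=
      Set.inter_subset_inter_left _ (hD_mono j (j+1) (by omega))
    have hdiff : (μ ((D (j+1) ∩ A (j+1)) \ (D j ∩ A (j+1)))).toReal
        = ν (D (j+1) ∩ A (j+1)) - ν (D j ∩ A (j+1)) := by
      show (μ ((D (j+1) ∩ A (j+1)) \ (D j ∩ A (j+1)))).toReal
        = (μ (D (j+1) ∩ A (j+1))).toReal - (μ (D j ∩ A (j+1))).toReal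
      rw [measure_diff hsub ((hDmeas j).inter (hAmeas (j+1))).nullMeasurableSet (hfin _)]
      rw [ENNReal.toReal_sub_of_le (measure_mono hsub) (hfin _)]
    rw [hEset, hdiff]
    have hkey : c j * ν (A (j+1)) ≤ ν (D j ∩ A (j+1)) := by
      have := key2 (j+1) (by omega)
      simpa using this
    have hup : ν (D (j+1) ∩ A (j+1)) - ν (D j ∩ A (j+1))
        ≤ (c (j+1) - c j) * ν (A (j+1)) := by
      rw [hnum (j+1), sub_mul]
      linarith [hkey]
    have hcd : 0 ≤ c (j+1) - c j := by
      have := hc_mono (j+1) (by omega)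
      simpa using this
    calc (ν (D (j+1) ∩ A (j+1)) - ν (D j ∩ A (j+1))) * (1/(j+1))
        ≤ ((c (j+1) - c j) * ν (A (j+1))) * (1/(j+1)) := by
          apply mul_le_mul_of_nonneg_right hup
          positivity
      _ ≤ ((c (j+1) - c j) * t (j+1)) * (1/(j+1)) := by
          apply mul_le_mul_of_nonneg_right _ (by positivity)
          exact mul_le_mul_of_nonneg_left (hsuper' (j+1)) hcd
      _ = (c (j+1) - c j) * (α / m) := by
          rw [ht]
          have hj1 : ((j:ℝ)+1) ≠ 0 := by positivity
          push_cast
          field_simp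
  calc ∑ j ∈ Finset.range m,
      (μ ({ω | khatFin α m (fun i => p i ω) = j + 1} ∩ {ω | p a ω ≤ α * (j+1) / m})).toReal
        * (1/(j+1))
      ≤ ∑ j ∈ Finset.range m, (c (j+1) - c j) * (α / m) := Finset.sum_le_sum hterm
    _ = (c m - c 0) * (α / m) := by rw [← Finset.sum_mul, Finset.sum_range_sub]
    _ ≤ 1 * (α / m) := by
        apply mul_le_mul_of_nonneg_right _ (by positivity)
        have := hc_le_one m
        have := hc_nonneg 0
        linarith
    _ = α / m := one_mul _

/-- Benjamini–Yekutieli: if the p-values `(p_a)_{a ≤ m}` are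
marginally super-uniform on the nulls `{1, …, m₀}` and PRDS on the nulls, then
the BH procedure at level `α` satisfies
`E[FDP(R_BH, {1,…,m₀})] ≤ α m₀ / m ≤ α`. -/
theorem BH_FDR_control_under_PRDS
    {Ω : Type*} [MeasurableSpace Ω] (μ : Measure Ω) [IsProbabilityMeasure μ]
    (m m₀ : ℕ) (hm : 1 ≤ m) (hm₀ : m₀ ≤ m)
    (α : ℝ) (hα0 : 0 < α) (hα1 : α < 1)
    (p : Fin m → Ω → ℝ) (hmeas : ∀ a, Measurable (p a))
    (hrange : ∀ a ω, p a ω ∈ Set.Icc (0 : ℝ) 1)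
    (hsuper : ∀ a : Fin m, (a : ℕ) < m₀ → ∀ t : ℝ,
      μ {ω | p a ω ≤ t} ≤ ENNReal.ofReal t)
    (hPRDS : ∀ a : Fin m, (a : ℕ) < m₀ →
      ∀ D : Set (Fin m → ℝ), MeasurableSet D → IsUpperSet D →
      ∀ t₁ t₂ : ℝ, t₁ ≤ t₂ →
        μ ({ω | (fun i => p i ω) ∈ D} ∩ {ω | p a ω ≤ t₁}) * μ {ω | p a ω ≤ t₂}
          ≤ μ ({ω | (fun i => p i ω) ∈ D} ∩ {ω | p a ω ≤ t₂})
              * μ {ω | p a ω ≤ t₁}) :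
    (∫ ω, FDP (RBHFin α m (fun i => p i ω))
        (Finset.univ.filter fun a : Fin m => (a : ℕ) < m₀) ∂μ) ≤ α * m₀ / m
    ∧ α * m₀ / m ≤ α := by
  classical
  have hmR : (0:ℝ) < m := by exact_mod_cast hm
  constructor
  · -- main FDR bound
    set H₀ : Finset (Fin m) := Finset.univ.filter (fun a : Fin m => (a : ℕ) < m₀) with hH₀
    have hH₀card : H₀.card = m₀ := by
      rw [hH₀]
      apply Finset.card_eq_of_bijective (fun i hi => (⟨i, lt_of_lt_of_le hi hm₀⟩ : Fin m))
      · intro a ha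
        rw [Finset.mem_filter] at ha
        exact ⟨(a : ℕ), ha.2, by apply Fin.ext; rfl⟩
      · intro i hi
        rw [Finset.mem_filter]
        exact ⟨Finset.mem_univ _, hi⟩
      · intro i j hi hj hij
        exact congrArg Fin.val hij
    have hEmeas : ∀ (a : Fin m) (j : ℕ), MeasurableSet
        ({ω | khatFin α m (fun i => p i ω) = j + 1} ∩ {ω | p a ω ≤ α * (j+1) / m}) := by
      intro a j
      apply MeasurableSet.inter
      · have hset : {x : Fin m → ℝ | khatFin α m x = j + 1}
            = {x | khatFin α m x ≤ j + 1} \ {x | khatFin α m x ≤ j} := by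
          ext x
          simp only [Set.mem_setOf_eq, Set.mem_diff]
          omega
        have hvec : Measurable (fun ω => (fun i => p i ω)) := measurable_pi_lambda _ hmeas
        have hpre : {ω | khatFin α m (fun i => p i ω) = j + 1}
            = (fun ω => (fun i => p i ω)) ⁻¹' {x | khatFin α m x = j + 1} := rfl
        rw [hpre, hset]
        exact hvec ((measurableSet_khat_le α m (j+1)).diff (measurableSet_khat_le α m j))
      · exact measurableSet_le (hmeas a) measurable_const
    have hptwise : (fun ω => FDP (RBHFin α m (fun i => p i ω)) H₀)
        = fun ω => ∑ j ∈ Finset.range m, ∑ a ∈ H₀,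
            Set.indicator ({ω' | khatFin α m (fun i => p i ω') = j + 1}
              ∩ {ω' | p a ω' ≤ α * (j+1) / m}) (fun _ => (1:ℝ)/(j+1)) ω := by
      funext ω
      rw [FDP_eq α m hα0.le hm (fun i => p i ω) H₀]
      refine Finset.sum_congr rfl fun j _ => Finset.sum_congr rfl fun a _ => ?_
      simp [Set.indicator_apply, Set.mem_inter_iff, Set.mem_setOf_eq]
    rw [hptwise]
    have hInt : ∀ (j : ℕ) (a : Fin m), Integrable
        (Set.indicator ({ω' | khatFin α m (fun i => p i ω') = j + 1}
          ∩ {ω' | p a ω' ≤ α * (j+1) / m}) (fun _ => (1:ℝ)/(j+1))) μ :=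
      fun j a => (integrable_const _).indicator (hEmeas a j)
    rw [integral_finset_sum _ (fun j _ => integrable_finset_sum _ (fun a _ => hInt j a))]
    have hstep : ∀ j ∈ Finset.range m,
        (∫ ω, (∑ a ∈ H₀, Set.indicator ({ω' | khatFin α m (fun i => p i ω') = j + 1}
          ∩ {ω' | p a ω' ≤ α * (j+1) / m}) (fun _ => (1:ℝ)/(j+1)) ω) ∂μ)
        = ∑ a ∈ H₀, (μ ({ω | khatFin α m (fun i => p i ω) = j + 1}
            ∩ {ω | p a ω ≤ α * (j+1) / m})).toReal * (1/(j+1)) := by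
      intro j _
      rw [integral_finset_sum _ (fun a _ => hInt j a)]
      refine Finset.sum_congr rfl fun a _ => ?_
      rw [integral_indicator_const _ (hEmeas a j), smul_eq_mul]
      rfl
    rw [Finset.sum_congr rfl hstep, Finset.sum_comm]
    calc ∑ a ∈ H₀, ∑ j ∈ Finset.range m,
          (μ ({ω | khatFin α m (fun i => p i ω) = j + 1}
            ∩ {ω | p a ω ≤ α * (j+1) / m})).toReal * (1/(j+1))
        ≤ ∑ _a ∈ H₀, α / m := by
          refine Finset.sum_le_sum fun a ha => ?_
          have han : (a : ℕ) < m₀ := by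
            rw [hH₀, Finset.mem_filter] at ha
            exact ha.2
          exact core_sum_bound μ m hm α hα0 p hmeas a (hsuper a han) (hPRDS a han)
      _ = (H₀.card : ℝ) * (α / m) := by rw [Finset.sum_const, nsmul_eq_mul]
      _ = α * m₀ / m := by rw [hH₀card]; ring
  · rw [div_le_iff₀ hmR]
    calc α * m₀ ≤ α * m := by
          have : (m₀:ℝ) ≤ m := by exact_mod_cast hm₀
          exact mul_le_mul_of_nonneg_left this hα0.le
      _ = α * m := rfl
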